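/- arXiv:2412.09686 — 3 statements merged into one kernel-verified Lean document; each statement's English description precedes it below -/
import Mathlib

section
/- If all hypotheses h in version space V_r with distance d(h,c) ≥ Δ(V_r)/(2Θ) from the target c are removed to form V_{r+1}, then Δ(V_{r+1}) ≤ Δ(V_r)/2, where Θ is the disagreement coefficient. -/
open MeasureTheory

/-- If all hypotheses `h` in the version space `Vr` with distance `d h c ≥ Δ(Vr)/(2Θ)`
from the target `c` are removed to form `Vr1`, then `Δ(Vr1) ≤ Δ(Vr)/2`, where `Θ` is
(an upper bound realized by) the disagreement coefficient. -/
theorem stmt_0 {X : Type*} [MeasurableSpace X] (μ : Measure X) [IsProbabilityMeasure μ]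
    (C : Set (X → Bool)) (c : X → Bool) (hc : c ∈ C)
    (DIS : Set (X → Bool) → Set X)
    (hDIS : ∀ V, DIS V = {x | ∃ h1 ∈ V, ∃ h2 ∈ V, h1 x ≠ h2 x})
    (d : (X → Bool) → (X → Bool) → ℝ)
    (hd : ∀ h1 h2, d h1 h2 = (μ {x | h1 x ≠ h2 x}).toReal)
    (Θ : ℝ) (hΘ : 1 ≤ Θ)
    (hcoef : ∀ ε : ℝ, 0 < ε → (μ (DIS {h | h ∈ C ∧ d c h ≤ ε})).toReal ≤ Θ * ε)
    (Vr Vr1 : Set (X → Bool)) (hVrC : Vr ⊆ C) (hcVr : c ∈ Vr)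
    (hsub : Vr1 ⊆ {h | h ∈ Vr ∧ d h c < (μ (DIS Vr)).toReal / (2 * Θ)}) :
    (μ (DIS Vr1)).toReal ≤ (μ (DIS Vr)).toReal / 2 := by
  set A := (μ (DIS Vr)).toReal with hAdef
  have hΘ0 : (0:ℝ) < Θ := lt_of_lt_of_le one_pos hΘ
  have hA0 : 0 ≤ A := ENNReal.toReal_nonneg
  have hdsymm : ∀ h : X → Bool, d c h = d h c := by
    intro h
    rw [hd, hd]
    have : {x | c x ≠ h x} = {x | h x ≠ c x} := by ext x; exact ne_comm
    rw [this]
  rcases eq_or_lt_of_le hA0 with hA | hA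
  · -- A = 0 : Vr1 is empty
    have hempty : Vr1 = ∅ := by
      ext h
      simp only [Set.mem_empty_iff_false, iff_false]
      intro hh
      have := (hsub hh).2
      rw [← hA] at this
      simp only [zero_div] at this
      have hdn : 0 ≤ d h c := by rw [hd]; exact ENNReal.toReal_nonneg
      linarith
    rw [hempty, hDIS]
    simpa using by linarith
  · have hε : 0 < A / (2 * Θ) := by positivity
    have hsub2 : DIS Vr1 ⊆ DIS {h | h ∈ C ∧ d c h ≤ A / (2 * Θ)} := by
      rw [hDIS, hDIS]
      rintro x ⟨h1, hh1, h2, hh2, hne⟩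
      refine ⟨h1, ⟨hVrC (hsub hh1).1, ?_⟩, h2, ⟨hVrC (hsub hh2).1, ?_⟩, hne⟩
      · rw [hdsymm]; exact le_of_lt (hsub hh1).2
      · rw [hdsymm]; exact le_of_lt (hsub hh2).2
    have hmono : (μ (DIS Vr1)).toReal ≤ (μ (DIS {h | h ∈ C ∧ d c h ≤ A / (2 * Θ)})).toReal :=
      ENNReal.toReal_mono (measure_ne_top μ _) (measure_mono hsub2)
    have := hcoef (A / (2 * Θ)) hε
    have key : Θ * (A / (2 * Θ)) = A / 2 := by field_simp
    linarith
end

section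
/- In the agnostic setting, if Δ(V_r) ≥ 8Θν and h ∈ V_r satisfies d(h, h*) ≥ Δ(V_r)/(2Θ), then the conditional error satisfies err^{D_r}(h) ≥ 3/(8Θ). -/
/-- Agnostic setting: if `Δ(V_r) ≥ 8Θν` and `h ∈ V_r` satisfies `d(h,h*) ≥ Δ(V_r)/(2Θ)`,
then the conditional error satisfies `err^{D_r}(h) ≥ 3/(8Θ)`, given the inequality
`d(h,h*) ≤ Δ(V_r)·err^{D_r}(h) + ν`. -/
theorem stmt_4 (Δ ν Θ d errDrH : ℝ)
    (hΘ : 1 ≤ Θ) (hν : 0 ≤ ν) (hΔpos : 0 < Δ)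
    (hbound : d ≤ Δ * errDrH + ν)
    (hΔ : 8 * Θ * ν ≤ Δ)
    (hfar : Δ / (2 * Θ) ≤ d) :
    3 / (8 * Θ) ≤ errDrH := by
  have hΘ0 : (0:ℝ) < Θ := by linarith
  rw [div_le_iff₀ (by positivity)] at hfar ⊢
  nlinarith [mul_le_mul_of_nonneg_right hbound (le_of_lt hΘ0), mul_pos hΔpos hΘ0]
end

section
/- If two runs of an algorithm each output a uniformly random element from their respective finite sets H₁ and H₂ (using the same shared randomness for the random ordering), and |H₁ Δ H₂|/|H₁ ∪ H₂| ≤ ρ/4, then the probability that the two outputs differ is at most ρ/4 plus the probability contributed by the symmetric difference; in particular, selecting the first element of a shared uniformly random ordering of H₁ ∪ H₂ restricted to each H_i yields the same output with probability at least 1 − ρ/4. -/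
open scoped ENNReal


/-- Two runs output the π-minimal elements of `H₁` and `H₂` respectively, under a shared
uniformly random ordering `π` of `U = H₁ ∪ H₂`. If `|H₁ Δ H₂| ≤ (ρ/4)|U|`, then the two
outputs differ with probability at most `ρ/4`. -/
theorem stmt_11 {α : Type*} [Fintype α] [DecidableEq α]
    (H₁ H₂ : Finset α) (h₁ : H₁.Nonempty) (h₂ : H₂.Nonempty)
    (hU : H₁ ∪ H₂ = Finset.univ)
    (ρ : ℝ) (hρ0 : 0 < ρ) (hρ1 : ρ ≤ 1)
    (hdiff : ((H₁ \ H₂ ∪ H₂ \ H₁).card : ℝ) ≤ ρ / 4 * ((H₁ ∪ H₂).card : ℝ))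
    (out : (α ≃ Fin (Fintype.card α)) → Finset α → α)
    (hout : ∀ (e : α ≃ Fin (Fintype.card α)) (H : Finset α), H.Nonempty →
      out e H ∈ H ∧ ∀ a ∈ H, e (out e H) ≤ e a) :
    (PMF.uniformOfFinset (Finset.univ : Finset (α ≃ Fin (Fintype.card α)))
        ⟨Fintype.equivFin α, Finset.mem_univ _⟩).toOuterMeasure
      {e | out e H₁ ≠ out e H₂} ≤ ENNReal.ofReal (ρ / 4) := by
  classical
  have hn : Fintype.card α = Fintype.card α := rfl
  let n := Fintype.card α
  have hα : Nonempty α := ⟨h₁.choose⟩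
  have hnpos : 0 < n := Fintype.card_pos
  set z : Fin n := ⟨0, hnpos⟩ with hz
  have hzle : ∀ x : Fin n, z ≤ x := fun x => Nat.zero_le x.1
  set S : Finset α := H₁ \ H₂ ∪ H₂ \ H₁ with hS
  -- Step 1 : event inclusion
  have hsub : {e : α ≃ Fin n | out e H₁ ≠ out e H₂} ⊆ {e : α ≃ Fin n | e.symm z ∈ S} := by
    intro e he
    by_contra hm
    simp only [Set.mem_setOf_eq, hS, Finset.mem_union, Finset.mem_sdiff, not_or, not_and,
      not_not] at hm
    set m := e.symm z with hmdef
    have hmU : m ∈ H₁ ∪ H₂ := hU ▸ Finset.mem_univ m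
    have hm1 : m ∈ H₁ ∧ m ∈ H₂ := by
      rcases Finset.mem_union.mp hmU with h | h
      · exact ⟨h, hm.1 h⟩
      · exact ⟨hm.2 h, h⟩
    have key : ∀ H : Finset α, H.Nonempty → m ∈ H → out e H = m := by
      intro H hHne hmH
      obtain ⟨_, hmin⟩ := hout e H hHne
      have h1 : e (out e H) ≤ e m := hmin m hmH
      have h2 : e (out e H) = z := le_antisymm (by rwa [hmdef, Equiv.apply_symm_apply] at h1)
        (hzle _)
      have := congrArg e.symm h2
      rwa [Equiv.symm_apply_apply] at this
    exact he (by rw [key H₁ h₁ hm1.1, key H₂ h₂ hm1.2])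
  -- fiber counting
  set fib : α → ℕ := fun a => (Finset.univ.filter fun e : α ≃ Fin n => e.symm z = a).card
    with hfib
  have hfibeq : ∀ a b : α, fib a = fib b := by
    intro a b
    apply Finset.card_bij (fun e _ => (Equiv.swap a b).trans e)
    · intro e he
      simp only [Finset.mem_filter, Finset.mem_univ, true_and] at he ⊢
      simp [Equiv.symm_trans_apply, he, Equiv.swap_apply_left]
    · intro e₁ h₁' e₂ h₂' h
      have := congrArg (fun f => (Equiv.swap a b).symm.trans f) h
      simpa [← Equiv.trans_assoc] using this
    · intro e he
      refine ⟨(Equiv.swap a b).trans e, ?_, ?_⟩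
      · simp only [Finset.mem_filter, Finset.mem_univ, true_and] at he ⊢
        simp [Equiv.symm_trans_apply, he, Equiv.swap_apply_right]
      · ext x
        simp [Equiv.trans_apply, Equiv.swap_apply_self]
  obtain ⟨a₀⟩ := hα
  set c := fib a₀ with hc
  have hcards : ∀ T : Finset α,
      (Finset.univ.filter fun e : α ≃ Fin n => e.symm z ∈ T).card = T.card * c := by
    intro T
    rw [Finset.card_eq_sum_card_fiberwise
      (s := Finset.univ.filter fun e : α ≃ Fin n => e.symm z ∈ T)
      (f := fun e : α ≃ Fin n => e.symm z) (t := T)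
      (fun e he => (Finset.mem_filter.mp he).2)]
    have key : ∀ a ∈ T,
        ((Finset.univ.filter fun e : α ≃ Fin n => e.symm z ∈ T).filter
          fun e => e.symm z = a).card = c := by
      intro a ha
      rw [hc, hfibeq a₀ a, hfib]
      congr 1
      ext e
      simp only [Finset.mem_filter, Finset.mem_univ, true_and]
      exact ⟨fun h => h.2, fun h => ⟨h ▸ ha, h⟩⟩
    rw [Finset.sum_congr rfl key, Finset.sum_const, smul_eq_mul]
  -- total count
  have htot : (Finset.univ : Finset (α ≃ Fin n)).card = n * c := by
    have := hcards Finset.univ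
    simpa [Finset.card_univ, hn] using this
  -- measure computation
  set p := PMF.uniformOfFinset (Finset.univ : Finset (α ≃ Fin n))
      ⟨Fintype.equivFin α, Finset.mem_univ _⟩ with hp
  have hmono : p.toOuterMeasure {e | out e H₁ ≠ out e H₂}
      ≤ p.toOuterMeasure {e : α ≃ Fin n | e.symm z ∈ S} := p.toOuterMeasure.mono hsub
  refine le_trans hmono ?_
  rw [hp, PMF.toOuterMeasure_uniformOfFinset_apply ⟨Fintype.equivFin α, Finset.mem_univ _⟩]
  have hgoal : ((S.card * c : ℕ) : ℝ≥0∞) / ((n * c : ℕ) : ℝ≥0∞) ≤ ENNReal.ofReal (ρ / 4) := ?_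
  · convert hgoal using 3
    · rfl
    · rw [← hcards S]; congr!

  apply ENNReal.div_le_of_le_mul
  have hreal : ((S.card * c : ℕ) : ℝ) ≤ ρ / 4 * ((n * c : ℕ) : ℝ) := by
    push_cast
    have hUcard : ((H₁ ∪ H₂).card : ℝ) = n := by rw [hU, Finset.card_univ, hn]
    have hd : (S.card : ℝ) ≤ ρ / 4 * n := by rw [← hUcard]; exact hdiff
    have hcnn : (0 : ℝ) ≤ (c : ℝ) := Nat.cast_nonneg c
    nlinarith [mul_le_mul_of_nonneg_right hd hcnn]
  calc ((S.card * c : ℕ) : ℝ≥0∞) = ENNReal.ofReal ((S.card * c : ℕ) : ℝ) := by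
        rw [ENNReal.ofReal_natCast]
    _ ≤ ENNReal.ofReal (ρ / 4 * ((n * c : ℕ) : ℝ)) := ENNReal.ofReal_le_ofReal hreal
    _ = ENNReal.ofReal (ρ / 4) * ((n * c : ℕ) : ℝ≥0∞) := by
        rw [ENNReal.ofReal_mul (by positivity), ENNReal.ofReal_natCast]
end
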